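/- arXiv:0705.2095 — 9 statements merged into one kernel-verified Lean document; each statement's English description precedes it below -/
import Mathlib

section
/- Let ψ be a character of the algebra 𝒜 of periodic functions on ℤ whose restrictions to the subalgebras 𝒜_m and 𝒜_n are both nonzero, and let κ(m;ψ), κ(n;ψ) be the unique integers in [0,m) and [0,n) respectively with ψ(u) = u(κ(m;ψ)) for all u ∈ 𝒜_m and ψ(u) = u(κ(n;ψ)) for all u ∈ 𝒜_n. Then κ(m;ψ) ≡ κ(n;ψ) (mod gcd(m,n)). -/
open Function

noncomputable section

/-- The subalgebra of `ℤ → ℂ` consisting of all periodic functions. -/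
def PerFun : Subalgebra ℂ (ℤ → ℂ) where
  carrier := {u | ∃ p : ℤ, 0 < p ∧ Function.Periodic u p}
  add_mem' := by
    rintro u v ⟨p, hp, hu⟩ ⟨q, hq, hv⟩
    refine ⟨p * q, mul_pos hp hq, ?_⟩
    have hu' : Function.Periodic u (p * q) := by simpa [mul_comm] using hu.int_mul q
    have hv' : Function.Periodic v (p * q) := hv.int_mul p
    exact hu'.add hv'
  mul_mem' := by
    rintro u v ⟨p, hp, hu⟩ ⟨q, hq, hv⟩
    refine ⟨p * q, mul_pos hp hq, ?_⟩
    have hu' : Function.Periodic u (p * q) := by simpa [mul_comm] using hu.int_mul q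
    have hv' : Function.Periodic v (p * q) := hv.int_mul p
    exact hu'.mul hv'
  one_mem' := ⟨1, one_pos, fun _ => rfl⟩
  zero_mem' := ⟨1, one_pos, fun _ => rfl⟩
  algebraMap_mem' := fun c => ⟨1, one_pos, fun _ => rfl⟩

/-- `u` belongs to the subalgebra `𝒜_p` of `p`-periodic functions. -/
def InAp (p : ℤ) (u : ↥PerFun) : Prop := Function.Periodic (u : ℤ → ℂ) p

/-- A character of the algebra `𝒜` of periodic functions: a nonzero
`ℂ`-linear multiplicative functional. -/
def IsChar (ψ : ↥PerFun → ℂ) : Prop :=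
  (∀ u v, ψ (u + v) = ψ u + ψ v) ∧
  (∀ (c : ℂ) (u), ψ (c • u) = c * ψ u) ∧
  (∀ u v, ψ (u * v) = ψ u * ψ v) ∧
  ψ ≠ 0

lemma shiftAdd_mem (u : ↥PerFun) (x : ℤ) :
    (fun y => (u : ℤ → ℂ) (x + y)) ∈ PerFun := by
  obtain ⟨p, hp, hu⟩ := u.2
  refine ⟨p, hp, fun y => ?_⟩
  show (u : ℤ → ℂ) (x + (y + p)) = (u : ℤ → ℂ) (x + y)
  rw [← add_assoc]
  exact hu (x + y)

/-- For `u ∈ 𝒜`, the function `y ↦ u (x + y)`, as an element of `𝒜`. -/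
def shiftAdd (u : ↥PerFun) (x : ℤ) : ↥PerFun :=
  ⟨fun y => (u : ℤ → ℂ) (x + y), shiftAdd_mem u x⟩

lemma shiftMul_mem (u : ↥PerFun) (x : ℤ) :
    (fun y => (u : ℤ → ℂ) (x * y)) ∈ PerFun := by
  obtain ⟨p, hp, hu⟩ := u.2
  refine ⟨p, hp, fun y => ?_⟩
  show (u : ℤ → ℂ) (x * (y + p)) = (u : ℤ → ℂ) (x * y)
  rw [mul_add]
  exact (hu.int_mul x) (x * y)

/-- For `u ∈ 𝒜`, the function `y ↦ u (x * y)`, as an element of `𝒜`. -/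
def shiftMul (u : ↥PerFun) (x : ℤ) : ↥PerFun :=
  ⟨fun y => (u : ℤ → ℂ) (x * y), shiftMul_mem u x⟩

lemma negArg_mem (u : ↥PerFun) :
    (fun y => (u : ℤ → ℂ) (-y)) ∈ PerFun := by
  obtain ⟨p, hp, hu⟩ := u.2
  refine ⟨p, hp, fun y => ?_⟩
  show (u : ℤ → ℂ) (-(y + p)) = (u : ℤ → ℂ) (-y)
  rw [neg_add, ← sub_eq_add_neg]
  exact hu.sub_eq (-y)

/-- For `u ∈ 𝒜`, the function `x ↦ u (-x)`, as an element of `𝒜`. -/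
def negArg (u : ↥PerFun) : ↥PerFun :=
  ⟨fun y => (u : ℤ → ℂ) (-y), negArg_mem u⟩

lemma plusInner_mem (ψ : ↥PerFun → ℂ) (u : ↥PerFun) :
    (fun x => ψ (shiftAdd u x)) ∈ PerFun := by
  obtain ⟨p, hp, hu⟩ := u.2
  refine ⟨p, hp, fun x => ?_⟩
  show ψ (shiftAdd u (x + p)) = ψ (shiftAdd u x)
  congr 1
  apply Subtype.ext
  funext y
  show (u : ℤ → ℂ) (x + p + y) = (u : ℤ → ℂ) (x + y)
  rw [show x + p + y = x + y + p by ring]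
  exact hu (x + y)

lemma dotInner_mem (ψ : ↥PerFun → ℂ) (u : ↥PerFun) :
    (fun x => ψ (shiftMul u x)) ∈ PerFun := by
  obtain ⟨p, hp, hu⟩ := u.2
  refine ⟨p, hp, fun x => ?_⟩
  show ψ (shiftMul u (x + p)) = ψ (shiftMul u x)
  congr 1
  apply Subtype.ext
  funext y
  show (u : ℤ → ℂ) ((x + p) * y) = (u : ℤ → ℂ) (x * y)
  rw [show (x + p) * y = x * y + y * p by ring]
  exact (hu.int_mul y) (x * y)

/-- The plus-convolution `(φ ⊕ ψ)(u) = φ (x ↦ ψ (y ↦ u (x + y)))`. -/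
def plusConv (φ ψ : ↥PerFun → ℂ) : ↥PerFun → ℂ :=
  fun u => φ ⟨fun x => ψ (shiftAdd u x), plusInner_mem ψ u⟩

/-- The dot-convolution `(φ ⊙ ψ)(u) = φ (x ↦ ψ (y ↦ u (x * y)))`. -/
def dotConv (φ ψ : ↥PerFun → ℂ) : ↥PerFun → ℂ :=
  fun u => φ ⟨fun x => ψ (shiftMul u x), dotInner_mem ψ u⟩

/-- The reflection `(⊖ φ)(u) = φ (x ↦ u (-x))`. -/
def reflect (φ : ↥PerFun → ℂ) : ↥PerFun → ℂ :=
  fun u => φ (negArg u)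

/-- The functional `θ : u ↦ u 0`. -/
def theta : ↥PerFun → ℂ := fun u => (u : ℤ → ℂ) 0

/-- The functional `ε : u ↦ u 1`. -/
def eps : ↥PerFun → ℂ := fun u => (u : ℤ → ℂ) 1


/-- If the restrictions of a character `ψ` to `𝒜_m` and `𝒜_n` are both nonzero,
with `ψ = eval at κ(m;ψ)` on `𝒜_m` and `ψ = eval at κ(n;ψ)` on `𝒜_n`, then
`κ(m;ψ) ≡ κ(n;ψ) (mod gcd m n)`. -/
theorem char_kappa_congruent_mod_gcd
    (ψ : ↥PerFun → ℂ) (hψ : IsChar ψ) (m n : ℤ) (hm : 0 < m) (hn : 0 < n)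
    (hm0 : ∃ u, InAp m u ∧ ψ u ≠ 0) (hn0 : ∃ u, InAp n u ∧ ψ u ≠ 0)
    (km kn : ℤ) (hkm0 : 0 ≤ km) (hkm1 : km < m)
    (hkm : ∀ u, InAp m u → ψ u = (u : ℤ → ℂ) km)
    (hkn0 : 0 ≤ kn) (hkn1 : kn < n)
    (hkn : ∀ u, InAp n u → ψ u = (u : ℤ → ℂ) kn) :
    km ≡ kn [ZMOD Int.gcd m n] := by
  classical
  set g : ℕ := Int.gcd m n with hg
  have hgpos : 0 < (g : ℤ) := by
    have := Int.gcd_pos_of_ne_zero_left n (ne_of_gt hm)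
    exact_mod_cast this
  have hgne : (g : ℂ) ≠ 0 := by
    exact_mod_cast (ne_of_gt (show (0:ℝ) < (g:ℝ) by exact_mod_cast hgpos))
  -- the witness function
  set f : ℤ → ℂ := fun x => Complex.exp (2 * Real.pi * Complex.I * x / g) with hf
  have hper : Function.Periodic f (g : ℤ) := by
    intro x
    have : (2 * Real.pi * Complex.I * ((x : ℂ) + (g:ℂ)) / (g:ℂ))
        = 2 * Real.pi * Complex.I * x / g + 2 * Real.pi * Complex.I := by
      push_cast
      field_simp
    simp only [hf]
    push_cast
    rw [this, Complex.exp_add, Complex.exp_two_pi_mul_I, mul_one]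
  have hmem : f ∈ PerFun := ⟨(g : ℤ), hgpos, hper⟩
  set U : ↥PerFun := ⟨f, hmem⟩ with hU
  have hperdvd : ∀ p : ℤ, (g : ℤ) ∣ p → Function.Periodic f p := by
    rintro p ⟨t, rfl⟩
    intro x
    have := (hper.int_mul t) x
    simpa [mul_comm] using this
  have hUm : InAp m U := hperdvd m (Int.gcd_dvd_left m n)
  have hUn : InAp n U := hperdvd n (Int.gcd_dvd_right m n)
  have heq : f km = f kn := by
    have h1 := hkm U hUm
    have h2 := hkn U hUn
    rw [h1] at h2
    exact h2
  rw [hf] at heq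
  rw [Complex.exp_eq_exp_iff_exists_int] at heq
  obtain ⟨z, hz⟩ := heq
  have hC : (km : ℂ) = kn + z * g := by
    have hπ : (Real.pi : ℂ) ≠ 0 := by
      exact_mod_cast Real.pi_ne_zero
    have hI := Complex.I_ne_zero
    field_simp at hz
    have h2 : (2 : ℂ) * Real.pi * Complex.I ≠ 0 := by
      simp [hπ, hI]
    -- rearrange hz to cancel 2πI
    have : 2 * Real.pi * Complex.I * (km : ℂ) = 2 * Real.pi * Complex.I * ((kn : ℂ) + z * g) := by
      rw [mul_add]
      linear_combination (2 * Real.pi * Complex.I) * hz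
    exact mul_left_cancel₀ h2 this
  have hZ : km = kn + z * g := by exact_mod_cast hC
  exact Int.modEq_iff_dvd.mpr ⟨-z, by linear_combination -hZ⟩

end
end

section
/- The set 𝒢 of all characters of the algebra 𝒜 of periodic functions on ℤ is closed under the plus-convolution φ⊕ψ, the dot-convolution φ⊙ψ, and the reflection ⊖φ: if φ and ψ are characters, then φ⊕ψ, φ⊙ψ and ⊖φ are again characters of 𝒜. -/
open Function

noncomputable section

lemma char_one {ψ : ↥PerFun → ℂ} (h : IsChar ψ) : ψ 1 = 1 := by
  obtain ⟨hadd, hsmul, hmul, hne⟩ := h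
  by_contra hne1
  apply hne
  funext u
  have h2 : ψ u * (1 - ψ 1) = 0 := by
    have := hmul u 1
    rw [mul_one] at this
    linear_combination this
  rcases mul_eq_zero.1 h2 with h | h
  · exact h
  · exact absurd (by linear_combination -h) hne1

lemma isChar_of_comp {F : ↥PerFun → ↥PerFun}
    (hFadd : ∀ u v, F (u + v) = F u + F v)
    (hFsmul : ∀ (c : ℂ) u, F (c • u) = c • F u)
    (hFmul : ∀ u v, F (u * v) = F u * F v)
    (hFone : F 1 = 1)
    {φ : ↥PerFun → ℂ} (hφ : IsChar φ) : IsChar (fun u => φ (F u)) := by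
  obtain ⟨hadd, hsmul, hmul, hne⟩ := hφ
  refine ⟨fun u v => ?_, fun c u => ?_, fun u v => ?_, ?_⟩
  · show φ (F (u + v)) = φ (F u) + φ (F v); rw [hFadd, hadd]
  · show φ (F (c • u)) = c * φ (F u); rw [hFsmul, hsmul]
  · show φ (F (u * v)) = φ (F u) * φ (F v); rw [hFmul, hmul]
  · intro h0
    have h1 : φ (F 1) = 1 := by rw [hFone]; exact char_one ⟨hadd, hsmul, hmul, hne⟩
    have h2 := congrFun h0 1
    simp only [Pi.zero_apply] at h2
    rw [h2] at h1
    exact zero_ne_one h1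

/-- The set `𝒢` of characters of `𝒜` is closed under the plus-convolution, the
dot-convolution and the reflection. -/
theorem characters_closed_under_convolutions
    (φ ψ : ↥PerFun → ℂ) (hφ : IsChar φ) (hψ : IsChar ψ) :
    IsChar (plusConv φ ψ) ∧ IsChar (dotConv φ ψ) ∧ IsChar (reflect φ) := by
  obtain ⟨hψa, hψs, hψm, hψn⟩ := hψ
  have hψ1 : ψ 1 = 1 := char_one ⟨hψa, hψs, hψm, hψn⟩
  refine ⟨?_, ?_, ?_⟩
  · show IsChar (fun u => φ (⟨fun x => ψ (shiftAdd u x), plusInner_mem ψ u⟩ : ↥PerFun))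
    refine isChar_of_comp ?_ ?_ ?_ ?_ hφ
    · intro u v
      apply Subtype.ext; funext x
      show ψ (shiftAdd (u + v) x) = ψ (shiftAdd u x) + ψ (shiftAdd v x)
      rw [← hψa]
      congr 1
    · intro c u
      apply Subtype.ext; funext x
      show ψ (shiftAdd (c • u) x) = c * ψ (shiftAdd u x)
      rw [← hψs]
      congr 1
    · intro u v
      apply Subtype.ext; funext x
      show ψ (shiftAdd (u * v) x) = ψ (shiftAdd u x) * ψ (shiftAdd v x)
      rw [← hψm]
      congr 1
    · apply Subtype.ext; funext x
      show ψ (shiftAdd 1 x) = 1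
      have : shiftAdd 1 x = 1 := Subtype.ext rfl
      rw [this, hψ1]
  · show IsChar (fun u => φ (⟨fun x => ψ (shiftMul u x), dotInner_mem ψ u⟩ : ↥PerFun))
    refine isChar_of_comp ?_ ?_ ?_ ?_ hφ
    · intro u v
      apply Subtype.ext; funext x
      show ψ (shiftMul (u + v) x) = ψ (shiftMul u x) + ψ (shiftMul v x)
      rw [← hψa]
      congr 1
    · intro c u
      apply Subtype.ext; funext x
      show ψ (shiftMul (c • u) x) = c * ψ (shiftMul u x)
      rw [← hψs]
      congr 1
    · intro u v
      apply Subtype.ext; funext x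
      show ψ (shiftMul (u * v) x) = ψ (shiftMul u x) * ψ (shiftMul v x)
      rw [← hψm]
      congr 1
    · apply Subtype.ext; funext x
      show ψ (shiftMul 1 x) = 1
      have : shiftMul 1 x = 1 := Subtype.ext rfl
      rw [this, hψ1]
  · show IsChar (fun u => φ (negArg u))
    refine isChar_of_comp ?_ ?_ ?_ ?_ hφ
    · intro u v; exact Subtype.ext rfl
    · intro c u; exact Subtype.ext rfl
    · intro u v; exact Subtype.ext rfl
    · exact Subtype.ext rfl

end
end

section
/- The set 𝒢 of all characters of the algebra 𝒜 of periodic functions on ℤ is a commutative ring with addition the plus-convolution ⊕, multiplication the dot-convolution ⊙, additive inverse the reflection ⊖, zero element θ = (u ↦ u(0)) and unit element ε = (u ↦ u(1)); in particular ⊕ and ⊙ are commutative and associative on 𝒢, θ and ε are neutral for ⊕ and ⊙ respectively, χ ⊕ (⊖χ) = θ for every character χ, and (φ⊕ψ)⊙χ = (φ⊙χ)⊕(ψ⊙χ) for all characters φ, ψ, χ. -/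
set_option maxHeartbeats 1000000
set_option synthInstance.maxHeartbeats 400000


open Function

noncomputable section

/-! ### Auxiliary machinery: classification of characters as point evaluations -/

/-- `F` acts as evaluation at `a` on all `p`-periodic functions. -/
def EvalAt (p : ℤ) (F : ↥PerFun → ℂ) (a : ℤ) : Prop :=
  ∀ u : ↥PerFun, InAp p u → F u = (u : ℤ → ℂ) a

/-- `F` is, on each subalgebra of `p`-periodic functions, a point evaluation. -/
def Pointlike (F : ↥PerFun → ℂ) : Prop :=
  ∀ p : ℤ, 0 < p → ∃ a : ℤ, EvalAt p F a

lemma periodic_eval_emod {p : ℤ} {u : ℤ → ℂ} (hu : Function.Periodic u p) (n : ℤ) :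
    u n = u (n % p) := by
  have h := (hu.int_mul (n / p)) (n % p)
  calc u n = u (n % p + n / p * p) := by rw [show n % p + n / p * p = n by
        rw [mul_comm]; exact Int.emod_add_mul_ediv n p]
    _ = u (n % p) := h

/-- The indicator of the residue class of `a` mod `p`, as a periodic function. -/
def resInd (p a : ℤ) (hp : 0 < p) : ↥PerFun :=
  ⟨fun n => if p ∣ n - a then 1 else 0,
   ⟨p, hp, fun n => by
      have h : (p ∣ n + p - a) ↔ (p ∣ n - a) := by
        constructor
        · intro h
          have := dvd_sub h (dvd_refl p)
          simpa [show n + p - a - p = n - a by ring] using this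
        · intro h
          have := dvd_add h (dvd_refl p)
          simpa [show n - a + p = n + p - a by ring] using this
      simp only [h]⟩⟩

lemma dvd_iff_eq_emod {p n a : ℤ} (ha : a ∈ Finset.Ico 0 p) :
    p ∣ n - a ↔ a = n % p := by
  rw [Finset.mem_Ico] at ha
  constructor
  · intro hd
    have h1 : n % p = a % p :=
      Int.emod_eq_emod_iff_emod_sub_eq_zero.2 (Int.emod_eq_zero_of_dvd hd)
    have h2 : a % p = a := Int.emod_eq_of_lt ha.1 ha.2
    omega
  · rintro rfl
    exact ⟨n / p, by have := Int.emod_add_mul_ediv n p; linarith⟩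

lemma resInd_apply (p a : ℤ) (hp : 0 < p) (n : ℤ) :
    (resInd p a hp : ℤ → ℂ) n = if p ∣ n - a then 1 else 0 := rfl

lemma resInd_mul (p a b : ℤ) (hp : 0 < p) (hab : ¬ p ∣ a - b) :
    resInd p a hp * resInd p b hp = 0 := by
  apply Subtype.ext
  funext n
  show (resInd p a hp : ℤ → ℂ) n * (resInd p b hp : ℤ → ℂ) n = 0
  rw [resInd_apply, resInd_apply]
  split_ifs with h1 h2
  · exact absurd (by simpa [show n - b - (n - a) = a - b by ring] using dvd_sub h2 h1) hab
  all_goals simp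

lemma resInd_idem (p a : ℤ) (hp : 0 < p) :
    resInd p a hp * resInd p a hp = resInd p a hp := by
  apply Subtype.ext
  funext n
  show (resInd p a hp : ℤ → ℂ) n * (resInd p a hp : ℤ → ℂ) n = (resInd p a hp : ℤ → ℂ) n
  rw [resInd_apply]
  split_ifs <;> simp

lemma rep_sum {p : ℤ} (hp : 0 < p) {u : ↥PerFun} (hu : InAp p u) :
    u = ∑ a ∈ Finset.Ico 0 p, (u : ℤ → ℂ) a • resInd p a hp := by
  apply Subtype.ext
  funext n
  have hcoe : ((∑ a ∈ Finset.Ico 0 p, (u : ℤ → ℂ) a • resInd p a hp : ↥PerFun) : ℤ → ℂ) n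
      = ∑ a ∈ Finset.Ico 0 p, (u : ℤ → ℂ) a * (resInd p a hp : ℤ → ℂ) n := by
    rw [AddSubmonoidClass.coe_finset_sum]
    simp [Finset.sum_apply]
  rw [hcoe]
  have : ∀ a ∈ Finset.Ico 0 p,
      (u : ℤ → ℂ) a * (resInd p a hp : ℤ → ℂ) n
        = if a = n % p then (u : ℤ → ℂ) a else 0 := by
    intro a ha
    rw [resInd_apply]
    by_cases h : p ∣ n - a
    · rw [if_pos h, if_pos ((dvd_iff_eq_emod ha).1 h)]; ring
    · rw [if_neg h, if_neg (fun he => h ((dvd_iff_eq_emod ha).2 he))]; ring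
  rw [Finset.sum_congr rfl this, Finset.sum_ite_eq' (Finset.Ico 0 p) (n % p)]
  have hmem : n % p ∈ Finset.Ico 0 p :=
    Finset.mem_Ico.2 ⟨Int.emod_nonneg n (ne_of_gt hp), Int.emod_lt_of_pos n hp⟩
  rw [if_pos hmem]
  exact periodic_eval_emod hu n

/-- Every character is pointlike: on `p`-periodic functions it is evaluation
at some integer. -/
lemma isChar_pointlike {ψ : ↥PerFun → ℂ} (h : IsChar ψ) : Pointlike ψ := by
  obtain ⟨hadd, hsmul, hmul, hne⟩ := h
  have h0 : ψ 0 = 0 := by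
    have h := hadd 0 0
    simp only [add_zero] at h
    exact left_eq_add.mp h
  have h1 : ψ 1 = 1 := by
    have hid : ψ 1 * ψ 1 = ψ 1 := by rw [← hmul]; norm_num
    have : ψ 1 = 0 ∨ ψ 1 = 1 := by
      rcases mul_eq_zero.1 (show ψ 1 * (ψ 1 - 1) = 0 by
        rw [mul_sub, mul_one, hid, sub_self]) with h | h
      · exact Or.inl h
      · exact Or.inr (sub_eq_zero.1 h)
    rcases this with h | h
    · exfalso
      apply hne
      funext u
      have := hmul u 1
      rw [mul_one] at this
      show ψ u = 0
      rw [this, h, mul_zero]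
    · exact h
  intro p hp
  have hψsum : ∀ (s : Finset ℤ) (f : ℤ → ↥PerFun),
      ψ (∑ a ∈ s, f a) = ∑ a ∈ s, ψ (f a) := fun s f =>
    map_sum (AddMonoidHom.mk' ψ hadd) f s
  -- the indicators sum to 1
  have hEsum : (∑ a ∈ Finset.Ico 0 p, resInd p a hp) = 1 := by
    have h := (rep_sum hp (u := (1 : ↥PerFun)) (fun x => rfl)).symm
    calc ∑ a ∈ Finset.Ico 0 p, resInd p a hp
        = ∑ a ∈ Finset.Ico 0 p, ((1 : ↥PerFun) : ℤ → ℂ) a • resInd p a hp :=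
          Finset.sum_congr rfl fun a _ => by
            rw [show ((1 : ↥PerFun) : ℤ → ℂ) a = (1 : ℂ) from rfl, one_smul]
      _ = 1 := h
  have hval : ∀ a, ψ (resInd p a hp) = 0 ∨ ψ (resInd p a hp) = 1 := by
    intro a
    have hid : ψ (resInd p a hp) * ψ (resInd p a hp) = ψ (resInd p a hp) := by
      rw [← hmul, resInd_idem]
    rcases mul_eq_zero.1 (show ψ (resInd p a hp) * (ψ (resInd p a hp) - 1) = 0 by
      rw [mul_sub, mul_one, hid, sub_self]) with h | h
    · exact Or.inl h
    · exact Or.inr (sub_eq_zero.1 h)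
  have hsum1 : ∑ a ∈ Finset.Ico 0 p, ψ (resInd p a hp) = 1 := by
    rw [← hψsum, hEsum, h1]
  have hex : ∃ a ∈ Finset.Ico 0 p, ψ (resInd p a hp) = 1 := by
    by_contra hc
    push_neg at hc
    have : ∀ a ∈ Finset.Ico 0 p, ψ (resInd p a hp) = 0 := fun a ha =>
      (hval a).resolve_right (hc a ha)
    rw [Finset.sum_eq_zero this] at hsum1
    exact one_ne_zero hsum1.symm
  obtain ⟨a, haI, ha1⟩ := hex
  refine ⟨a, fun u hu => ?_⟩
  have hzero : ∀ b ∈ Finset.Ico 0 p, b ≠ a → ψ (resInd p b hp) = 0 := by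
    intro b hbI hba
    have hnd : ¬ p ∣ b - a := by
      intro hd
      exact hba ((dvd_iff_eq_emod haI).1 hd ▸ by
        have : b % p = b := Int.emod_eq_of_lt (Finset.mem_Ico.1 hbI).1 (Finset.mem_Ico.1 hbI).2
        omega)
    have : ψ (resInd p b hp) * ψ (resInd p a hp) = 0 := by
      rw [← hmul, resInd_mul p b a hp hnd, h0]
    rw [ha1, mul_one] at this
    exact this
  calc ψ u = ψ (∑ b ∈ Finset.Ico 0 p, (u : ℤ → ℂ) b • resInd p b hp) := by
        rw [← rep_sum hp hu]
    _ = ∑ b ∈ Finset.Ico 0 p, (u : ℤ → ℂ) b * ψ (resInd p b hp) := by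
        rw [hψsum]
        exact Finset.sum_congr rfl fun b _ => hsmul _ _
    _ = (u : ℤ → ℂ) a := by
        rw [Finset.sum_eq_single a (fun b hb hba => by rw [hzero b hb hba, mul_zero])
          (fun ha' => absurd haI ha')]
        rw [ha1, mul_one]

/-- Every pointlike functional is a character. -/
lemma pointlike_isChar {F : ↥PerFun → ℂ} (hF : Pointlike F) : IsChar F := by
  have key2 : ∀ u v : ↥PerFun, ∃ p a, InAp p u ∧ InAp p v ∧ EvalAt p F a := by
    intro u v
    obtain ⟨p, hp, hu⟩ := u.2
    obtain ⟨q, hq, hv⟩ := v.2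
    obtain ⟨a, ha⟩ := hF (p * q) (mul_pos hp hq)
    exact ⟨p * q, a, by simpa [mul_comm, InAp] using hu.int_mul q, hv.int_mul p, ha⟩
  have hF1 : F 1 = 1 := by
    obtain ⟨a, ha⟩ := hF 1 one_pos
    have := ha 1 (fun x => rfl)
    simpa using this
  refine ⟨?_, ?_, ?_, ?_⟩
  · intro u v
    obtain ⟨p, a, hu, hv, ha⟩ := key2 u v
    have huv : InAp p (u + v) := hu.add hv
    rw [ha u hu, ha v hv, ha (u + v) huv]
    rfl
  · intro c u
    obtain ⟨p, a, hu, _, ha⟩ := key2 u u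
    have hcu : InAp p (c • u) := by
      intro x
      show c * (u : ℤ → ℂ) (x + p) = c * (u : ℤ → ℂ) x
      rw [hu x]
    rw [ha u hu, ha (c • u) hcu]
    rfl
  · intro u v
    obtain ⟨p, a, hu, hv, ha⟩ := key2 u v
    have huv : InAp p (u * v) := hu.mul hv
    rw [ha u hu, ha v hv, ha (u * v) huv]
    rfl
  · intro h
    rw [h] at hF1
    simpa using hF1

lemma evalAt_theta (p : ℤ) : EvalAt p theta 0 := fun _ _ => rfl

lemma evalAt_eps (p : ℤ) : EvalAt p eps 1 := fun _ _ => rfl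

lemma evalAt_plusConv {p a b : ℤ} {φ ψ : ↥PerFun → ℂ}
    (hφ : EvalAt p φ a) (hψ : EvalAt p ψ b) : EvalAt p (plusConv φ ψ) (a + b) := by
  intro u hu
  have hinner : ∀ x, ψ (shiftAdd u x) = (u : ℤ → ℂ) (x + b) := fun x =>
    hψ (shiftAdd u x) (fun y => by
      show (u : ℤ → ℂ) (x + (y + p)) = (u : ℤ → ℂ) (x + y)
      rw [← add_assoc]
      exact hu (x + y))
  have hper : InAp p (⟨fun x => ψ (shiftAdd u x), plusInner_mem ψ u⟩ : ↥PerFun) := by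
    intro x
    show ψ (shiftAdd u (x + p)) = ψ (shiftAdd u x)
    rw [hinner, hinner, show x + p + b = x + b + p by ring]
    exact hu (x + b)
  show φ ⟨fun x => ψ (shiftAdd u x), plusInner_mem ψ u⟩ = _
  rw [hφ _ hper]
  exact hinner a

lemma evalAt_dotConv {p a b : ℤ} {φ ψ : ↥PerFun → ℂ}
    (hφ : EvalAt p φ a) (hψ : EvalAt p ψ b) : EvalAt p (dotConv φ ψ) (a * b) := by
  intro u hu
  have hinner : ∀ x, ψ (shiftMul u x) = (u : ℤ → ℂ) (x * b) := fun x =>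
    hψ (shiftMul u x) (fun y => by
      show (u : ℤ → ℂ) (x * (y + p)) = (u : ℤ → ℂ) (x * y)
      rw [show x * (y + p) = x * y + x * p by ring]
      exact (hu.int_mul x) (x * y))
  have hper : InAp p (⟨fun x => ψ (shiftMul u x), dotInner_mem ψ u⟩ : ↥PerFun) := by
    intro x
    show ψ (shiftMul u (x + p)) = ψ (shiftMul u x)
    rw [hinner, hinner, show (x + p) * b = x * b + b * p by ring]
    exact (hu.int_mul b) (x * b)
  show φ ⟨fun x => ψ (shiftMul u x), dotInner_mem ψ u⟩ = _
  rw [hφ _ hper]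
  exact hinner a

lemma evalAt_reflect {p a : ℤ} {φ : ↥PerFun → ℂ}
    (hφ : EvalAt p φ a) : EvalAt p (reflect φ) (-a) := by
  intro u hu
  have hper : InAp p (negArg u) := by
    intro y
    show (u : ℤ → ℂ) (-(y + p)) = (u : ℤ → ℂ) (-y)
    have := hu (-(y + p))
    rw [show -(y + p) + p = -y by ring] at this
    exact this.symm
  show φ (negArg u) = _
  rw [hφ _ hper]
  rfl

lemma pointlike_plusConv {φ ψ : ↥PerFun → ℂ} (hφ : Pointlike φ) (hψ : Pointlike ψ) :
    Pointlike (plusConv φ ψ) := fun p hp => by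
  obtain ⟨a, ha⟩ := hφ p hp
  obtain ⟨b, hb⟩ := hψ p hp
  exact ⟨a + b, evalAt_plusConv ha hb⟩

lemma pointlike_dotConv {φ ψ : ↥PerFun → ℂ} (hφ : Pointlike φ) (hψ : Pointlike ψ) :
    Pointlike (dotConv φ ψ) := fun p hp => by
  obtain ⟨a, ha⟩ := hφ p hp
  obtain ⟨b, hb⟩ := hψ p hp
  exact ⟨a * b, evalAt_dotConv ha hb⟩

lemma pointlike_reflect {φ : ↥PerFun → ℂ} (hφ : Pointlike φ) :
    Pointlike (reflect φ) := fun p hp => by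
  obtain ⟨a, ha⟩ := hφ p hp
  exact ⟨-a, evalAt_reflect ha⟩

/-- The set `𝒢` of characters of `𝒜` is a commutative ring under the
plus-convolution `⊕` (addition), the dot-convolution `⊙` (multiplication),
the reflection `⊖` (additive inverse), with zero `θ = (u ↦ u 0)` and unit
`ε = (u ↦ u 1)`. -/
theorem characters_commutative_ring :
    IsChar theta ∧ IsChar eps ∧
    (∀ φ ψ, IsChar φ → IsChar ψ → IsChar (plusConv φ ψ)) ∧
    (∀ φ ψ, IsChar φ → IsChar ψ → IsChar (dotConv φ ψ)) ∧
    (∀ φ, IsChar φ → IsChar (reflect φ)) ∧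
    (∀ φ ψ, IsChar φ → IsChar ψ → plusConv φ ψ = plusConv ψ φ) ∧
    (∀ φ ψ χ, IsChar φ → IsChar ψ → IsChar χ →
      plusConv (plusConv φ ψ) χ = plusConv φ (plusConv ψ χ)) ∧
    (∀ φ ψ, IsChar φ → IsChar ψ → dotConv φ ψ = dotConv ψ φ) ∧
    (∀ φ ψ χ, IsChar φ → IsChar ψ → IsChar χ →
      dotConv (dotConv φ ψ) χ = dotConv φ (dotConv ψ χ)) ∧
    (∀ φ, IsChar φ → plusConv φ theta = φ) ∧
    (∀ φ, IsChar φ → dotConv φ eps = φ) ∧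
    (∀ χ, IsChar χ → plusConv χ (reflect χ) = theta) ∧
    (∀ φ ψ χ, IsChar φ → IsChar ψ → IsChar χ →
      dotConv (plusConv φ ψ) χ = plusConv (dotConv φ χ) (dotConv ψ χ)) := by
  refine ⟨pointlike_isChar (fun p hp => ⟨0, evalAt_theta p⟩),
    pointlike_isChar (fun p hp => ⟨1, evalAt_eps p⟩),
    fun φ ψ hφ hψ => pointlike_isChar
      (pointlike_plusConv (isChar_pointlike hφ) (isChar_pointlike hψ)),
    fun φ ψ hφ hψ => pointlike_isChar
      (pointlike_dotConv (isChar_pointlike hφ) (isChar_pointlike hψ)),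
    fun φ hφ => pointlike_isChar (pointlike_reflect (isChar_pointlike hφ)),
    ?_, ?_, ?_, ?_, ?_, ?_, ?_, ?_⟩
  · intro φ ψ hφ hψ
    funext u
    obtain ⟨p, hp, hu⟩ := u.2
    obtain ⟨a, ha⟩ := isChar_pointlike hφ p hp
    obtain ⟨b, hb⟩ := isChar_pointlike hψ p hp
    rw [evalAt_plusConv ha hb u hu, evalAt_plusConv hb ha u hu, add_comm]
  · intro φ ψ χ hφ hψ hχ
    funext u
    obtain ⟨p, hp, hu⟩ := u.2
    obtain ⟨a, ha⟩ := isChar_pointlike hφ p hp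
    obtain ⟨b, hb⟩ := isChar_pointlike hψ p hp
    obtain ⟨c, hc⟩ := isChar_pointlike hχ p hp
    rw [evalAt_plusConv (evalAt_plusConv ha hb) hc u hu,
      evalAt_plusConv ha (evalAt_plusConv hb hc) u hu, add_assoc]
  · intro φ ψ hφ hψ
    funext u
    obtain ⟨p, hp, hu⟩ := u.2
    obtain ⟨a, ha⟩ := isChar_pointlike hφ p hp
    obtain ⟨b, hb⟩ := isChar_pointlike hψ p hp
    rw [evalAt_dotConv ha hb u hu, evalAt_dotConv hb ha u hu, mul_comm]
  · intro φ ψ χ hφ hψ hχ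
    funext u
    obtain ⟨p, hp, hu⟩ := u.2
    obtain ⟨a, ha⟩ := isChar_pointlike hφ p hp
    obtain ⟨b, hb⟩ := isChar_pointlike hψ p hp
    obtain ⟨c, hc⟩ := isChar_pointlike hχ p hp
    rw [evalAt_dotConv (evalAt_dotConv ha hb) hc u hu,
      evalAt_dotConv ha (evalAt_dotConv hb hc) u hu, mul_assoc]
  · intro φ hφ
    funext u
    obtain ⟨p, hp, hu⟩ := u.2
    obtain ⟨a, ha⟩ := isChar_pointlike hφ p hp
    rw [evalAt_plusConv ha (evalAt_theta p) u hu, add_zero, ha u hu]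
  · intro φ hφ
    funext u
    obtain ⟨p, hp, hu⟩ := u.2
    obtain ⟨a, ha⟩ := isChar_pointlike hφ p hp
    rw [evalAt_dotConv ha (evalAt_eps p) u hu, mul_one, ha u hu]
  · intro χ hχ
    funext u
    obtain ⟨p, hp, hu⟩ := u.2
    obtain ⟨a, ha⟩ := isChar_pointlike hχ p hp
    rw [evalAt_plusConv ha (evalAt_reflect ha) u hu, evalAt_theta p u hu, add_neg_cancel]
  · intro φ ψ χ hφ hψ hχ
    funext u
    obtain ⟨p, hp, hu⟩ := u.2
    obtain ⟨a, ha⟩ := isChar_pointlike hφ p hp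
    obtain ⟨b, hb⟩ := isChar_pointlike hψ p hp
    obtain ⟨c, hc⟩ := isChar_pointlike hχ p hp
    rw [evalAt_dotConv (evalAt_plusConv ha hb) hc u hu,
      evalAt_plusConv (evalAt_dotConv ha hc) (evalAt_dotConv hb hc) u hu, add_mul]

end
end

section
/- For every character ψ of 𝒜, every positive integer n, and every real number R with 0 < R < 1, the cluster V_n(ψ) admits the representation V_n(ψ) = ⋂_{j=0}^{n−1} U_R(e^n_j; ψ), where U_R(u;ψ) = {φ ∈ 𝒢 : |φ(u) − ψ(u)| < R} and e^n_j ∈ 𝒜_n is the indicator function of the set {k ∈ ℤ : k ≡ j (mod n)}. -/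
open Function

noncomputable section

/-- The indicator `e^n_j ∈ 𝒜_n` of the raster `{k ∈ ℤ : k ≡ j (mod n)}`,
as an element of `𝒜`. -/
def eInd (n j : ℤ) (hn : 0 < n) : ↥PerFun :=
  ⟨fun k => if k % n = j % n then 1 else 0,
   ⟨n, hn, fun k => by
      have h : (k + n) % n = k % n := by
        simpa using Int.add_mul_emod_self_left (a := k) (b := n) (c := 1)
      simp [h]⟩⟩

/-- The subbasic Gelfand neighborhood `U_R(u;ψ) = {φ ∈ 𝒢 : |φ u − ψ u| < R}`. -/
def Uball (R : ℝ) (u : ↥PerFun) (ψ : ↥PerFun → ℂ) : Set (↥PerFun → ℂ) :=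
  {φ | IsChar φ ∧ ‖φ u - ψ u‖ < R}

set_option synthInstance.maxHeartbeats 1000000

lemma char_map_zero (φ : ↥PerFun → ℂ) (h : IsChar φ) : φ 0 = 0 := by
  simpa using h.2.1 0 0

lemma char_map_sum (φ : ↥PerFun → ℂ) (h : IsChar φ) {ι : Type*} (s : Finset ι)
    (f : ι → ↥PerFun) : φ (∑ j ∈ s, f j) = ∑ j ∈ s, φ (f j) := by
  classical
  induction s using Finset.induction with
  | empty => simpa using char_map_zero φ h
  | @insert a s ha ih =>
    rw [Finset.sum_insert ha, h.1, ih, Finset.sum_insert ha]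

lemma eInd_periodic (n j : ℤ) (hn : 0 < n) : InAp n (eInd n j hn) := by
  intro k
  show (if (k + n) % n = j % n then (1:ℂ) else 0) = _
  have h : (k + n) % n = k % n := by
    simpa using Int.add_mul_emod_self_left (a := k) (b := n) (c := 1)
  simp [h, eInd]

lemma eInd_mul_self (n j : ℤ) (hn : 0 < n) :
    eInd n j hn * eInd n j hn = eInd n j hn := by
  apply Subtype.ext
  funext k
  show (if k % n = j % n then (1:ℂ) else 0) * (if k % n = j % n then (1:ℂ) else 0)
      = (if k % n = j % n then (1:ℂ) else 0)
  split <;> simp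

lemma char_eInd_eq_zero_or_one (φ : ↥PerFun → ℂ) (h : IsChar φ) (n j : ℤ)
    (hn : 0 < n) : φ (eInd n j hn) = 0 ∨ φ (eInd n j hn) = 1 := by
  have := h.2.2.1 (eInd n j hn) (eInd n j hn)
  rw [eInd_mul_self] at this
  rcases mul_eq_zero.mp (by linear_combination -this :
      φ (eInd n j hn) * (φ (eInd n j hn) - 1) = 0) with h' | h'
  · exact Or.inl h'
  · exact Or.inr (sub_eq_zero.mp h')

lemma decomp (n : ℤ) (hn : 0 < n) (u : ↥PerFun) (hu : InAp n u) :
    u = ∑ j ∈ Finset.Ico (0:ℤ) n, (u : ℤ → ℂ) j • eInd n j hn := by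
  apply Subtype.ext
  have hcoe : ((∑ j ∈ Finset.Ico (0:ℤ) n, (u : ℤ → ℂ) j • eInd n j hn : ↥PerFun) : ℤ → ℂ)
      = ∑ j ∈ Finset.Ico (0:ℤ) n, (u : ℤ → ℂ) j • ((eInd n j hn : ↥PerFun) : ℤ → ℂ) := by
    push_cast
    rfl
  rw [hcoe]
  funext k
  have hk0 : 0 ≤ k % n := Int.emod_nonneg k (ne_of_gt hn)
  have hkn : k % n < n := Int.emod_lt_of_pos k hn
  have hmem : k % n ∈ Finset.Ico (0:ℤ) n := Finset.mem_Ico.mpr ⟨hk0, hkn⟩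
  have hsum : (∑ j ∈ Finset.Ico (0:ℤ) n,
      (u : ℤ → ℂ) j • ((eInd n j hn : ↥PerFun) : ℤ → ℂ)) k
      = (u : ℤ → ℂ) (k % n) := by
    rw [Finset.sum_apply]
    rw [Finset.sum_eq_single (k % n)]
    · have : k % n % n = k % n := Int.emod_emod_of_dvd k dvd_rfl
      simp [eInd, this]
    · intro j hj hne
      have hj' := Finset.mem_Ico.mp hj
      have : j % n = j := Int.emod_eq_of_lt hj'.1 hj'.2
      simp [eInd, this, Ne.symm hne]
    · intro hab
      exact absurd hmem hab
  rw [hsum]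
  have : (u : ℤ → ℂ) (k % n + (k / n) * n) = (u : ℤ → ℂ) (k % n) :=
    (hu.int_mul (k / n)) (k % n)
  conv_lhs => rw [show k = k % n + (k / n) * n by rw [mul_comm]; exact (Int.emod_add_mul_ediv k n).symm]
  exact this

/-- For every character `ψ`, positive integer `n` and `0 < R < 1`, the cluster
`V_n(ψ)` is the intersection `⋂_{0 ≤ j < n} U_R(e^n_j; ψ)`. -/
theorem cluster_eq_iInter_Uball
    (ψ : ↥PerFun → ℂ) (hψ : IsChar ψ) (n : ℤ) (hn : 0 < n)
    (R : ℝ) (hR0 : 0 < R) (hR1 : R < 1) :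
    {φ | IsChar φ ∧ ∀ u, InAp n u → φ u = ψ u}
      = ⋂ j ∈ Set.Ico (0 : ℤ) n, Uball R (eInd n j hn) ψ := by
  ext φ
  simp only [Set.mem_setOf_eq, Set.mem_iInter, Set.mem_Ico]
  constructor
  · rintro ⟨hφ, hagree⟩ j hj
    refine ⟨hφ, ?_⟩
    rw [hagree (eInd n j hn) (eInd_periodic n j hn)]
    simpa using hR0
  · intro h
    have h0 : (0:ℤ) ∈ Set.Ico (0:ℤ) n := Set.mem_Ico.mpr ⟨le_refl 0, hn⟩
    have hφ : IsChar φ := (h 0 h0).1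
    refine ⟨hφ, ?_⟩
    have hval : ∀ j ∈ Finset.Ico (0:ℤ) n, φ (eInd n j hn) = ψ (eInd n j hn) := by
      intro j hj
      have hj' := Finset.mem_Ico.mp hj
      have hlt := (h j (Set.mem_Ico.mpr hj')).2
      have hR1' : ‖φ (eInd n j hn) - ψ (eInd n j hn)‖ < 1 :=
        lt_trans hlt hR1
      rcases char_eInd_eq_zero_or_one φ hφ n j hn with h1 | h1 <;>
        rcases char_eInd_eq_zero_or_one ψ hψ n j hn with h2 | h2 <;>
        rw [h1, h2] <;> rw [h1, h2] at hR1' <;> simp_all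
    intro u hu
    have hdec := decomp n hn u hu
    rw [hdec, char_map_sum φ hφ, char_map_sum ψ hψ]
    apply Finset.sum_congr rfl
    intro j hj
    rw [hφ.2.1, hψ.2.1, hval j hj]

end
end

section
/- In the ring 𝒫 of polyadic numbers, for all positive integers m and n the principal ideals satisfy 𝒢^(m) ∩ 𝒢^(n) = 𝒢^(lcm(m,n)), where 𝒢^(k) = {k·α : α ∈ 𝒫}. -/
open Filter

/-- `α` is a `0`-sequence: every positive integer divides `α k`
for all but finitely many `k`. -/
def IsZeroSeq (α : ℕ → ℤ) : Prop :=
  ∀ n : ℤ, 0 < n → ∀ᶠ k in Filter.cofinite, n ∣ α k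

/-- `α ≡ Sα`: the sequence `α` represents a polyadic number. -/
def RepsPolyadic (α : ℕ → ℤ) : Prop :=
  IsZeroSeq (fun k => α k - α (k + 1))

/-- The ideal `𝒞₀` of `0`-sequences in the ring `𝒞` of integer sequences. -/
def C0 : Ideal (ℕ → ℤ) where
  carrier := {α | IsZeroSeq α}
  add_mem' := by
    intro a b ha hb n hn
    filter_upwards [ha n hn, hb n hn] with k h1 h2
    exact dvd_add h1 h2
  zero_mem' := by
    intro n hn
    exact Filter.Eventually.of_forall fun k => dvd_zero n
  smul_mem' := by
    intro c a ha n hn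
    filter_upwards [ha n hn] with k h
    exact h.mul_left (c k)

/-- The quotient ring `𝒞 ⧸ 𝒞₀`. -/
abbrev CQuot := (ℕ → ℤ) ⧸ C0

/-- The ring `𝒫` of polyadic numbers: the subring of `𝒞 ⧸ 𝒞₀` consisting
of the classes containing a sequence `α` with `α ≡ Sα`. -/
def Polyadic : Subring CQuot where
  carrier := {x | ∃ α : ℕ → ℤ, RepsPolyadic α ∧ Ideal.Quotient.mk C0 α = x}
  zero_mem' := by
    refine ⟨0, ?_, map_zero _⟩
    intro n hn
    exact Filter.Eventually.of_forall fun k => by simp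
  one_mem' := by
    refine ⟨1, ?_, map_one _⟩
    intro n hn
    exact Filter.Eventually.of_forall fun k => by simp [Pi.one_apply]
  add_mem' := by
    rintro x y ⟨a, ha, rfl⟩ ⟨b, hb, rfl⟩
    refine ⟨a + b, ?_, map_add _ _ _⟩
    intro n hn
    filter_upwards [ha n hn, hb n hn] with k h1 h2
    have : (a + b) k - (a + b) (k + 1)
        = (a k - a (k + 1)) + (b k - b (k + 1)) := by
      simp [Pi.add_apply]; ring
    rw [this]
    exact dvd_add h1 h2
  neg_mem' := by
    rintro x ⟨a, ha, rfl⟩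
    refine ⟨-a, ?_, map_neg _ _⟩
    intro n hn
    filter_upwards [ha n hn] with k h1
    have : (-a) k - (-a) (k + 1) = -(a k - a (k + 1)) := by
      simp [Pi.neg_apply]; ring
    rw [this]
    exact h1.neg_right
  mul_mem' := by
    rintro x y ⟨a, ha, rfl⟩ ⟨b, hb, rfl⟩
    refine ⟨a * b, ?_, map_mul _ _ _⟩
    intro n hn
    filter_upwards [ha n hn, hb n hn] with k h1 h2
    have : (a * b) k - (a * b) (k + 1)
        = a k * (b k - b (k + 1)) + b (k + 1) * (a k - a (k + 1)) := by
      simp [Pi.mul_apply]; ring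
    rw [this]
    exact dvd_add (h2.mul_left (a k)) (h1.mul_left (b (k + 1)))

/-- The principal ideal `𝒢⁽ᵏ⁾ = {k·α : α ∈ 𝒫}` of the polyadic ring, as a set. -/
def GIdl (p : ℤ) : Set ↥Polyadic := {x | ∃ y : ↥Polyadic, x = (p : ↥Polyadic) * y}

/-- The grid `𝒢(p;a) = {a + γ : γ ∈ 𝒢⁽ᵖ⁾}`. -/
def Grid (p : ℤ) (a : ↥Polyadic) : Set ↥Polyadic := {x | ∃ γ ∈ GIdl p, x = a + γ}

/-- The canonical embedding `𝒵 : ℤ → 𝒫`, sending `m` to the class of the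
constant sequence with value `m`. -/
def Zemb (m : ℤ) : ↥Polyadic :=
  ⟨Ideal.Quotient.mk C0 (fun _ => m),
   ⟨fun _ => m, fun n hn => Filter.Eventually.of_forall fun k => by simp, rfl⟩⟩


lemma lcm_aux (m n : ℤ) (hm : 0 < m) (hn : 0 < n) :
    ∃ u v : ℤ, (m / Int.gcd m n) * u + (n / Int.gcd m n) * v = 1 ∧
      (m / Int.gcd m n) * n = (Int.lcm m n : ℤ) ∧
      (n / Int.gcd m n) * m = (Int.lcm m n : ℤ) := by
  set g : ℤ := (Int.gcd m n : ℤ) with hg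
  have hgpos : 0 < g := by
    rw [hg]; exact_mod_cast Int.gcd_pos_of_ne_zero_left n hm.ne'
  have hga : g * (m / g) = m := Int.mul_ediv_cancel' (Int.gcd_dvd_left m n)
  have hgb : g * (n / g) = n := Int.mul_ediv_cancel' (Int.gcd_dvd_right m n)
  have hcop : Int.gcd (m / g) (n / g) = 1 :=
    Int.gcd_div_gcd_div_gcd (Int.gcd_pos_of_ne_zero_left n hm.ne')
  have hbez := Int.gcd_eq_gcd_ab (m / g) (n / g)
  rw [hcop] at hbez
  have hml : g * (Int.lcm m n : ℤ) = m * n := by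
    have h := Int.gcd_mul_lcm m n
    have h2 : ((m.gcd n * m.lcm n : ℕ) : ℤ) = ((m * n).natAbs : ℤ) := by rw [Int.natAbs_mul]; exact_mod_cast h
    rw [Int.natAbs_of_nonneg (by positivity)] at h2
    push_cast at h2
    exact_mod_cast h2
  refine ⟨_, _, hbez.symm, ?_, ?_⟩
  · apply mul_left_cancel₀ hgpos.ne'
    rw [hml, ← mul_assoc, hga]
  · apply mul_left_cancel₀ hgpos.ne'
    rw [hml, ← mul_assoc, hgb, mul_comm]

/-- In the polyadic ring `𝒫`, the principal ideals satisfy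
`𝒢⁽ᵐ⁾ ∩ 𝒢⁽ⁿ⁾ = 𝒢⁽ˡᶜᵐ⁽ᵐ,ⁿ⁾⁾` for all positive integers `m`, `n`. -/
theorem GIdl_inter_GIdl (m n : ℤ) (hm : 0 < m) (hn : 0 < n) :
    GIdl m ∩ GIdl n = GIdl (Int.lcm m n) := by
  obtain ⟨u, v, huv, h1, h2⟩ := lcm_aux m n hm hn
  ext x
  simp only [Set.mem_inter_iff, GIdl, Set.mem_setOf_eq]
  constructor
  · rintro ⟨⟨α, hα⟩, ⟨β, hβ⟩⟩
    refine ⟨(u : ↥Polyadic) * β + (v : ↥Polyadic) * α, ?_⟩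
    calc x = ((m / (Int.gcd m n : ℤ) * u + n / (Int.gcd m n : ℤ) * v : ℤ) : ↥Polyadic) * x := by
          rw [huv]; push_cast; ring
      _ = ((m / (Int.gcd m n : ℤ) * u : ℤ) : ↥Polyadic) * ((n : ↥Polyadic) * β)
            + ((n / (Int.gcd m n : ℤ) * v : ℤ) : ↥Polyadic) * ((m : ↥Polyadic) * α) := by
          rw [← hα, ← hβ]; push_cast; ring
      _ = ((m / (Int.gcd m n : ℤ) * n : ℤ) : ↥Polyadic) * ((u : ↥Polyadic) * β)
            + ((n / (Int.gcd m n : ℤ) * m : ℤ) : ↥Polyadic) * ((v : ↥Polyadic) * α) := by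
          push_cast; ring
      _ = ((Int.lcm m n : ℤ) : ↥Polyadic) * ((u : ↥Polyadic) * β + (v : ↥Polyadic) * α) := by
          rw [h1, h2]; ring
  · rintro ⟨y, hy⟩
    constructor
    · refine ⟨((n / (Int.gcd m n : ℤ) : ℤ) : ↥Polyadic) * y, ?_⟩
      rw [hy, ← h2]; push_cast; ring
    · refine ⟨((m / (Int.gcd m n : ℤ) : ℤ) : ↥Polyadic) * y, ?_⟩
      rw [hy, ← h1]; push_cast; ring
end

section
/- The subring 𝒵 of integer polyadic numbers (the image of the canonical embedding 𝒵 : ℤ → 𝒫 sending m to the class of the constant sequence with value m) is dense in the polyadic ring 𝒫 with the topology σ: every grid 𝒢(n;α), for n a positive integer and α ∈ 𝒫, contains an integer polyadic number. -/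
open Filter

/-- The subring of integer polyadic numbers is dense in `(𝒫, σ)`: every grid
`𝒢(n;α)`, `n` a positive integer, `α ∈ 𝒫`, contains an integer polyadic number. -/
theorem integer_polyadic_dense (n : ℤ) (hn : 0 < n) (a : ↥Polyadic) :
    ∃ m : ℤ, Zemb m ∈ Grid n a := by
  obtain ⟨α, hα, hmk⟩ := a.2
  -- choose K such that n ∣ α k - α (k+1) for all k ≥ K
  have h1 : ∀ᶠ k in Filter.atTop, n ∣ α k - α (k + 1) := by
    rw [← Nat.cofinite_eq_atTop]; exact hα n hn
  obtain ⟨K, hK⟩ := Filter.eventually_atTop.mp h1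
  set m : ℤ := α K with hm
  have key : ∀ k, K ≤ k → n ∣ m - α k := by
    intro k hk
    induction k with
    | zero => simp [Nat.le_zero.mp hk, hm]
    | succ j ih =>
      rcases Nat.lt_or_ge K (j+1) with h | h
      · have hj : K ≤ j := Nat.lt_succ_iff.mp h
        have := dvd_add (ih hj) (hK j hj)
        simpa [sub_add_sub_cancel] using this
      · simp [Nat.le_antisymm hk h, hm]
  set β : ℕ → ℤ := fun k => (m - α k) / n with hβ
  have hnz : n ≠ 0 := hn.ne'
  have hmul : ∀ k, K ≤ k → n * β k = m - α k := fun k hk =>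
    Int.mul_ediv_cancel' (key k hk)
  have hrep : RepsPolyadic β := by
    intro d hd
    have h2 : ∀ᶠ k in Filter.atTop, (n * d) ∣ α k - α (k + 1) := by
      rw [← Nat.cofinite_eq_atTop]; exact hα (n * d) (mul_pos hn hd)
    obtain ⟨K', hK'⟩ := Filter.eventually_atTop.mp h2
    rw [Nat.cofinite_eq_atTop, Filter.eventually_atTop]
    refine ⟨max K K', fun k hk => ?_⟩
    have hk1 : K ≤ k := le_trans (le_max_left _ _) hk
    have hk2 : K' ≤ k := le_trans (le_max_right _ _) hk
    have heq : n * (β k - β (k + 1)) = α (k + 1) - α k := by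
      rw [mul_sub, hmul k hk1, hmul (k+1) (le_trans hk1 (Nat.le_succ k))]
      ring
    have hdvd : (n * d) ∣ n * (β k - β (k + 1)) := by
      rw [heq, ← neg_sub]
      exact (hK' k hk2).neg_right
    exact (mul_dvd_mul_iff_left hnz).mp hdvd
  set y : ↥Polyadic := ⟨Ideal.Quotient.mk C0 β, ⟨β, hrep, rfl⟩⟩ with hy
  refine ⟨m, (n : ↥Polyadic) * y, ⟨y, rfl⟩, ?_⟩
  apply Subtype.ext
  show (Zemb m : CQuot) = (a : CQuot) + ((n : ↥Polyadic) : CQuot) * (y : CQuot)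
  have hcast : ((n : ↥Polyadic) : CQuot) = Ideal.Quotient.mk C0 (fun _ => n) := by
    push_cast
    rfl
  rw [hcast, ← hmk]
  show Ideal.Quotient.mk C0 (fun _ => m) = _
  rw [← map_mul, ← map_add, Ideal.Quotient.eq]
  intro d hd
  rw [Nat.cofinite_eq_atTop, Filter.eventually_atTop]
  refine ⟨K, fun k hk => ?_⟩
  have h := hmul k hk
  simp only [Pi.sub_apply, Pi.add_apply, Pi.mul_apply]
  have h0 : m - (α k + n * β k) = 0 := by rw [h]; ring
  rw [h0]
  exact dvd_zero d
end

section
/- Division with remainder holds in the polyadic ring: for every positive integer n, each polyadic number α can be uniquely written as α = n·γ + 𝒵(r), where γ ∈ 𝒫 and r is an integer with 0 ≤ r ≤ n−1 (𝒵(r) being the integer polyadic number with value r). -/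
open Filter

lemma intCast_val (n : ℤ) :
    ((n : ↥Polyadic) : CQuot) = Ideal.Quotient.mk C0 (fun _ => (n : ℤ)) := by
  rw [Subring.coe_intCast, ← map_intCast (Ideal.Quotient.mk C0) n]
  rfl

lemma eventually_ge_cofinite (N : ℕ) : ∀ᶠ k in (Filter.cofinite : Filter ℕ), N ≤ k := by
  rw [Nat.cofinite_eq_atTop]; exact eventually_ge_atTop N

/-- If `n·γ = 0` in `𝒫` with `n > 0`, then `γ = 0`. -/
lemma int_mul_eq_zero {n : ℤ} (hn : 0 < n) {γ : ↥Polyadic}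
    (h : (n : ↥Polyadic) * γ = 0) : γ = 0 := by
  obtain ⟨β, -, hβ⟩ := γ.2
  have hval : (((n : ↥Polyadic) * γ : ↥Polyadic) : CQuot) = 0 := by
    rw [h]; rfl
  rw [Subring.coe_mul, intCast_val, ← hβ, ← map_mul,
    Ideal.Quotient.eq_zero_iff_mem] at hval
  have hβ0 : β ∈ C0 := by
    intro m hm
    filter_upwards [hval (n * m) (by positivity)] with k hk
    have : n * m ∣ n * β k := hk
    exact (mul_dvd_mul_iff_left hn.ne').mp this
  apply Subtype.ext
  rw [← hβ]
  exact Ideal.Quotient.eq_zero_iff_mem.mpr hβ0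

/-- If `𝒵(s) = n·γ` in `𝒫` with `n > 0`, then `n ∣ s`. -/
lemma dvd_of_zemb_eq {n s : ℤ} (hn : 0 < n) {γ : ↥Polyadic}
    (h : Zemb s = (n : ↥Polyadic) * γ) : n ∣ s := by
  obtain ⟨β, -, hβ⟩ := γ.2
  have hval : ((Zemb s : ↥Polyadic) : CQuot) =
      (((n : ℤ) : ↥Polyadic) : CQuot) * ((γ : ↥Polyadic) : CQuot) := by rw [h]; rfl
  rw [intCast_val, ← hβ, ← map_mul] at hval
  have hval' : Ideal.Quotient.mk C0 (fun _ => s) =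
      Ideal.Quotient.mk C0 ((fun _ => n) * β) := hval
  rw [Ideal.Quotient.eq] at hval'
  obtain ⟨k, hk⟩ := (hval' n hn).exists
  have h1 : (n : ℤ) ∣ s - n * β k := by
    simpa [Pi.sub_apply, Pi.mul_apply] using hk
  have h2 : (n : ℤ) ∣ n * β k := Dvd.intro _ rfl
  simpa using dvd_add h1 h2

/-- Division with remainder in the polyadic ring: for every positive integer `n`,
each polyadic number `a` is uniquely of the form `a = n·γ + 𝒵(r)` with `γ ∈ 𝒫`
and `0 ≤ r ≤ n - 1`. -/
theorem polyadic_division_with_remainder (n : ℤ) (hn : 0 < n) (a : ↥Polyadic) :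
    ∃! gr : ↥Polyadic × ℤ, (0 ≤ gr.2 ∧ gr.2 ≤ n - 1) ∧
      a = (n : ↥Polyadic) * gr.1 + Zemb gr.2 := by
  obtain ⟨α, hα, hval⟩ := a.2
  obtain ⟨N, hN⟩ := eventually_atTop.mp (Nat.cofinite_eq_atTop ▸ hα n hn)
  set r : ℤ := α N % n with hr_def
  have hr0 : 0 ≤ r := Int.emod_nonneg _ hn.ne'
  have hr1 : r ≤ n - 1 := by have := Int.emod_lt_of_pos (α N) hn; omega
  -- all sufficiently late terms are `≡ r (mod n)`
  have hr : ∀ k, N ≤ k → n ∣ α k - r := by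
    intro k hk
    induction k, hk using Nat.le_induction with
    | base =>
      refine ⟨α N / n, ?_⟩
      rw [hr_def, Int.emod_def]; ring
    | succ k hk ih =>
      have h1 : n ∣ α k - α (k + 1) := hN k hk
      have : α (k + 1) - r = (α k - r) - (α k - α (k + 1)) := by ring
      rw [this]
      exact dvd_sub ih h1
  set β : ℕ → ℤ := fun k => (α k - r) / n with hβ_def
  have hβex : ∀ k, N ≤ k → n * β k = α k - r := fun k hk =>
    Int.mul_ediv_cancel' (hr k hk)
  have hβreps : RepsPolyadic β := by
    intro m hm
    filter_upwards [hα (n * m) (by positivity), eventually_ge_cofinite N]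
      with k h1 h2
    have e1 : n * β k = α k - r := hβex k h2
    have e2 : n * β (k + 1) = α (k + 1) - r := hβex _ (h2.trans (Nat.le_succ k))
    have e3 : n * (β k - β (k + 1)) = α k - α (k + 1) := by
      rw [mul_sub, e1, e2]; ring
    have h4 : n * m ∣ n * (β k - β (k + 1)) := by rw [e3]; exact h1
    exact (mul_dvd_mul_iff_left hn.ne').mp h4
  set γ : ↥Polyadic := ⟨Ideal.Quotient.mk C0 β, β, hβreps, rfl⟩ with hγ_def
  have key : a = (n : ↥Polyadic) * γ + Zemb r := by
    apply Subtype.ext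
    rw [Subring.coe_add, Subring.coe_mul, intCast_val, ← hval]
    show Ideal.Quotient.mk C0 α =
      Ideal.Quotient.mk C0 (fun _ => (n : ℤ)) * Ideal.Quotient.mk C0 β +
        Ideal.Quotient.mk C0 (fun _ => r)
    rw [← map_mul, ← map_add, Ideal.Quotient.eq]
    intro m hm
    filter_upwards [eventually_ge_cofinite N] with k hk
    have e1 : n * β k = α k - r := hβex k hk
    convert dvd_zero m using 1
    show α k - (n * β k + r) = 0
    linarith [e1]
    rfl
  refine ⟨⟨γ, r⟩, ⟨⟨hr0, hr1⟩, key⟩, ?_⟩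
  rintro ⟨γ', r'⟩ ⟨⟨hr0', hr1'⟩, key'⟩
  have heq : (n : ↥Polyadic) * γ' + Zemb r' = (n : ↥Polyadic) * γ + Zemb r := by
    rw [← key, ← key']
  -- first, the remainders agree
  have hZsub : Zemb (r' - r) = (n : ↥Polyadic) * (γ - γ') := by
    apply Subtype.ext
    have hv : ((Zemb r' : ↥Polyadic) : CQuot) - ((Zemb r : ↥Polyadic) : CQuot) =
        (((n : ↥Polyadic) * (γ - γ') : ↥Polyadic) : CQuot) := by
      have : Zemb r' - Zemb r = (n : ↥Polyadic) * (γ - γ') := by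
        have := heq
        ring_nf
        ring_nf at this
        linear_combination this
      rw [← this]; push_cast; ring
    rw [← hv]
    show Ideal.Quotient.mk C0 (fun _ => r' - r) = _
    rw [show (fun _ : ℕ => r' - r) = (fun _ : ℕ => r') - (fun _ : ℕ => r) from rfl,
      map_sub]
    rfl
  have hdvd : n ∣ r' - r := dvd_of_zemb_eq hn hZsub
  have hrr : r' = r := by
    obtain ⟨c, hc⟩ := hdvd
    have hub : n * c < n * 1 := by rw [mul_one]; linarith
    have hlb : n * (-1) < n * c := by rw [mul_neg_one]; linarith
    have h1 : c < 1 := lt_of_mul_lt_mul_left hub hn.le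
    have h2 : (-1 : ℤ) < c := lt_of_mul_lt_mul_left hlb hn.le
    have hc0 : c = 0 := by omega
    rw [hc0, mul_zero] at hc
    omega
  -- then, the quotients agree
  have hγγ : γ' = γ := by
    have h0 : (n : ↥Polyadic) * (γ - γ') = 0 := by
      rw [← hZsub, hrr]
      apply Subtype.ext
      show Ideal.Quotient.mk C0 (fun _ : ℕ => r - r) = 0
      have h5 : (fun _ : ℕ => r - r) = (0 : ℕ → ℤ) := by
        funext k; show r - r = 0; ring
      rw [h5, map_zero]
    have := int_mul_eq_zero hn h0
    have : γ - γ' = 0 := this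
    linear_combination -this
  rw [Prod.ext_iff]
  exact ⟨hγγ, hrr⟩
end

section
/- A sequence of polyadic numbers α^(n) converges in the topological ring (𝒫, σ) (i.e., there exists α ∈ 𝒫 such that every zero neighborhood 𝒢^(p) contains α^(n) − α for all but finitely many n) if and only if the consecutive differences α^(n) − α^(n+1) converge to zero, i.e., for every positive integer p, α^(n) − α^(n+1) ∈ 𝒢^(p) for all but finitely many n. -/
open Filter

lemma reps_sub {a b : ℕ → ℤ} (ha : RepsPolyadic a) (hb : RepsPolyadic b) :
    RepsPolyadic (a - b) := by
  intro n hn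
  filter_upwards [ha n hn, hb n hn] with k h1 h2
  have h : (a - b) k - (a - b) (k + 1) = (a k - a (k + 1)) - (b k - b (k + 1)) := by
    simp only [Pi.sub_apply]; ring
  rw [h]
  exact dvd_sub h1 h2

lemma GIdl_zero (p : ℤ) : (0 : ↥Polyadic) ∈ GIdl p := ⟨0, by ring⟩

lemma GIdl_add {p : ℤ} {x y : ↥Polyadic} (hx : x ∈ GIdl p) (hy : y ∈ GIdl p) :
    x + y ∈ GIdl p := by
  obtain ⟨u, hu⟩ := hx; obtain ⟨v, hv⟩ := hy
  exact ⟨u + v, by rw [hu, hv]; ring⟩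

lemma GIdl_sub {p : ℤ} {x y : ↥Polyadic} (hx : x ∈ GIdl p) (hy : y ∈ GIdl p) :
    x - y ∈ GIdl p := by
  obtain ⟨u, hu⟩ := hx; obtain ⟨v, hv⟩ := hy
  exact ⟨u - v, by rw [hu, hv]; ring⟩

/-- Beyond some threshold, a polyadic representative is stable modulo `q`. -/
lemma reps_stable {α : ℕ → ℤ} (h : RepsPolyadic α) {q : ℤ} (hq : 0 < q) :
    ∃ S : ℕ, ∀ j ≥ S, ∀ j' ≥ S, q ∣ α j - α j' := by
  have h2 := h q hq
  rw [Nat.cofinite_eq_atTop, eventually_atTop] at h2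
  obtain ⟨S, hS⟩ := h2
  have key : ∀ j ≥ S, ∀ d : ℕ, q ∣ α j - α (j + d) := by
    intro j hj d
    induction d with
    | zero => simp
    | succ d ih =>
      have h3 := hS (j + d) (by omega)
      have he : α j - α (j + (d + 1)) = (α j - α (j + d)) + (α (j + d) - α (j + d + 1)) := by
        have : j + (d + 1) = j + d + 1 := by omega
        rw [this]; ring
      rw [he]
      exact dvd_add ih h3
  refine ⟨S, fun j hj j' hj' => ?_⟩
  rcases le_total j j' with hle | hle
  · obtain ⟨d, rfl⟩ := Nat.exists_eq_add_of_le hle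
    exact key j hj d
  · obtain ⟨d, rfl⟩ := Nat.exists_eq_add_of_le hle
    have := key j' hj' d
    have h4 : α j' - α (j' + d) = -(α (j' + d) - α j') := by ring
    rw [h4] at this
    exact (dvd_neg.mp this)

lemma coe_int_polyadic (p : ℤ) :
    ((p : ↥Polyadic) : CQuot) = Ideal.Quotient.mk C0 (fun _ => p) := by
  have h1 : ((p : ↥Polyadic) : CQuot) = (p : CQuot) := by push_cast; rfl
  have h2 : (Ideal.Quotient.mk C0 (p : ℕ → ℤ)) = (p : CQuot) := map_intCast _ p
  have h3 : (p : ℕ → ℤ) = fun _ => p := by funext k; simp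
  rw [h1, ← h2, h3]

/-- Membership in `𝒢⁽ᵖ⁾` in terms of a representative. -/
lemma mem_GIdl_iff {p : ℤ} (hp : 0 < p) (x : ↥Polyadic) (δ : ℕ → ℤ)
    (hδ : RepsPolyadic δ) (hmk : Ideal.Quotient.mk C0 δ = (x : CQuot)) :
    x ∈ GIdl p ↔ ∀ᶠ j in Filter.cofinite, p ∣ δ j := by
  constructor
  · rintro ⟨y, hy⟩
    obtain ⟨η, hη, hηmk⟩ := y.2
    have hx : Ideal.Quotient.mk C0 δ = Ideal.Quotient.mk C0 ((fun _ => p) * η) := by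
      rw [hmk, hy]
      have : ((((p : ↥Polyadic)) * y : ↥Polyadic) : CQuot)
          = ((p : ↥Polyadic) : CQuot) * (y : CQuot) := rfl
      rw [this, coe_int_polyadic, ← hηmk, ← map_mul]
    have hmem : δ - (fun _ => p) * η ∈ C0 := (Ideal.Quotient.eq).mp hx
    filter_upwards [hmem p hp] with j hj
    have he : δ j = (δ j - p * η j) + p * η j := by ring
    rw [he]
    exact dvd_add hj ⟨η j, rfl⟩
  · intro h
    rw [Nat.cofinite_eq_atTop, eventually_atTop] at h
    obtain ⟨t, ht⟩ := h
    set δ' : ℕ → ℤ := fun j => δ (max j t) with hδ'def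
    have hdvd : ∀ j, p ∣ δ' j := fun j => ht _ (le_max_right _ _)
    set η : ℕ → ℤ := fun j => δ' j / p with hηdef
    have hpη : ∀ j, p * η j = δ' j := fun j => Int.mul_ediv_cancel' (hdvd j)
    have hδ'reps : RepsPolyadic δ' := by
      intro n hn
      have h2 := hδ n hn
      rw [Nat.cofinite_eq_atTop, eventually_atTop] at h2 ⊢
      obtain ⟨s, hs⟩ := h2
      refine ⟨max s t, fun j hj => ?_⟩
      have e1 : max j t = j := max_eq_left (by omega)
      have e2 : max (j + 1) t = j + 1 := max_eq_left (by omega)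
      show n ∣ δ (max j t) - δ (max (j + 1) t)
      rw [e1, e2]
      exact hs j (by omega)
    have hηreps : RepsPolyadic η := by
      intro n hn
      have h2 := hδ'reps (p * n) (by positivity)
      filter_upwards [h2] with j hj
      have he : p * (η j - η (j + 1)) = δ' j - δ' (j + 1) := by
        rw [mul_sub, hpη, hpη]
      have : p * n ∣ p * (η j - η (j + 1)) := by rw [he]; exact hj
      exact (mul_dvd_mul_iff_left hp.ne').mp this
    have hmkδ' : Ideal.Quotient.mk C0 δ' = Ideal.Quotient.mk C0 δ := by
      rw [Ideal.Quotient.eq]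
      intro n hn
      rw [Nat.cofinite_eq_atTop, eventually_atTop]
      refine ⟨t, fun j hj => ?_⟩
      have e1 : max j t = j := max_eq_left (by omega)
      show n ∣ δ (max j t) - δ j
      rw [e1, sub_self]
      exact dvd_zero n
    refine ⟨⟨Ideal.Quotient.mk C0 η, ⟨η, hηreps, rfl⟩⟩, ?_⟩
    apply Subtype.ext
    show (x : CQuot) = ((p : ↥Polyadic) : CQuot) * Ideal.Quotient.mk C0 η
    rw [coe_int_polyadic, ← map_mul, ← hmk, ← hmkδ']
    congr 1
    funext j
    exact (hpη j).symm

/-- A sequence of polyadic numbers converges in `(𝒫, σ)` (to some limit `a`,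
meaning every zero neighborhood `𝒢⁽ᵖ⁾` contains `A n − a` for all but finitely
many `n`) if and only if the consecutive differences `A n − A (n+1)` tend to
zero. -/
theorem polyadic_converges_iff_consecutive_differences
    (A : ℕ → ↥Polyadic) :
    (∃ a : ↥Polyadic, ∀ p : ℤ, 0 < p →
        ∀ᶠ n in Filter.cofinite, A n - a ∈ GIdl p) ↔
    (∀ p : ℤ, 0 < p →
        ∀ᶠ n in Filter.cofinite, A n - A (n + 1) ∈ GIdl p) := by
  constructor
  · rintro ⟨a, ha⟩ p hp
    have h1 := ha p hp
    rw [Nat.cofinite_eq_atTop, eventually_atTop] at h1 ⊢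
    obtain ⟨t, ht⟩ := h1
    refine ⟨t, fun n hn => ?_⟩
    have he : A n - A (n + 1) = (A n - a) - (A (n + 1) - a) := by ring
    rw [he]
    exact GIdl_sub (ht n hn) (ht (n + 1) (by omega))
  · intro H
    -- choose representatives
    choose α hαreps hαmk using fun n => (A n).2
    -- factorial positivity
    have hfac : ∀ m : ℕ, (0 : ℤ) < (m.factorial : ℤ) := fun m => by exact_mod_cast m.factorial_pos
    -- Step 1: Cauchy thresholds via telescoping
    have hstep1 : ∀ m : ℕ, ∃ N₀ : ℕ, ∀ n ≥ N₀, ∀ n' ≥ n, A n - A n' ∈ GIdl (m.factorial : ℤ) := by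
      intro m
      have h2 := H _ (hfac m)
      rw [Nat.cofinite_eq_atTop, eventually_atTop] at h2
      obtain ⟨N₀, hN₀⟩ := h2
      refine ⟨N₀, fun n hn n' hn' => ?_⟩
      induction n', hn' using Nat.le_induction with
      | base => simpa using GIdl_zero (m.factorial : ℤ)
      | succ n' hnn' ih =>
        have he : A n - A (n' + 1) = (A n - A n') + (A n' - A (n' + 1)) := by ring
        rw [he]
        exact GIdl_add ih (hN₀ n' (le_trans hn hnn'))
    choose N₀ hN₀ using hstep1
    set N : ℕ → ℕ := fun m => m + (Finset.range (m + 1)).sup N₀ with hNdef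
    have hNmono : Monotone N := fun a b hab =>
      Nat.add_le_add hab (Finset.sup_mono (Finset.range_subset_range.mpr (by omega)))
    have hNself : ∀ m, m ≤ N m := fun m => Nat.le_add_right m _
    have hNge : ∀ m, N₀ m ≤ N m := fun m =>
      le_trans (Finset.le_sup (Finset.self_mem_range_succ m)) (Nat.le_add_left _ _)
    have hN : ∀ m, ∀ n ≥ N m, ∀ n' ≥ n, A n - A n' ∈ GIdl (m.factorial : ℤ) :=
      fun m n hn n' hn' => hN₀ m n (le_trans (hNge m) hn) n' hn'
    -- Step 2: stage thresholds
    have hstage : ∀ k : ℕ, ∃ T : ℕ,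
        (∀ j ≥ T, ∀ m ∈ Finset.range (k + 1), ∀ n ∈ Finset.Icc (N m) (N k),
          ((m.factorial : ℤ)) ∣ α n j - α (N k) j) ∧
        (∀ j ≥ T, ∀ j' ≥ T, ((k.factorial : ℤ)) ∣ α (N k) j - α (N k) j') := by
      intro k
      obtain ⟨S, hS⟩ := reps_stable (hαreps (N k)) (hfac k)
      have hev : ∀ᶠ j in atTop, ∀ m ∈ Finset.range (k + 1), ∀ n ∈ Finset.Icc (N m) (N k),
          ((m.factorial : ℤ)) ∣ α n j - α (N k) j := by
        rw [eventually_all_finset]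
        intro m hm
        rw [eventually_all_finset]
        intro n hn
        obtain ⟨hn1, hn2⟩ := Finset.mem_Icc.mp hn
        have hmem : A n - A (N k) ∈ GIdl (m.factorial : ℤ) := hN m n hn1 (N k) hn2
        have hmk : Ideal.Quotient.mk C0 (α n - α (N k)) = ((A n - A (N k)) : CQuot) := by
          rw [map_sub, hαmk n, hαmk (N k)]
        have h3 := (mem_GIdl_iff (hfac m) _ (α n - α (N k))
          (reps_sub (hαreps n) (hαreps (N k))) hmk).mp hmem
        rw [Nat.cofinite_eq_atTop] at h3
        filter_upwards [h3] with j hj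
        simpa [Pi.sub_apply] using hj
      rw [eventually_atTop] at hev
      obtain ⟨T1, hT1⟩ := hev
      exact ⟨max T1 S, fun j hj => hT1 j (le_trans (le_max_left _ _) hj),
        fun j hj j' hj' => hS j (le_trans (le_max_right _ _) hj) j'
          (le_trans (le_max_right _ _) hj')⟩
    choose T₀ hT₀A hT₀B using hstage
    set M : ℕ → ℕ := fun k => k + (Finset.range (k + 1)).sup T₀ with hMdef
    have hMmono : Monotone M := fun a b hab =>
      Nat.add_le_add hab (Finset.sup_mono (Finset.range_subset_range.mpr (by omega)))
    have hMself : ∀ k, k ≤ M k := fun k => Nat.le_add_right k _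
    have hMT : ∀ k, T₀ k ≤ M k := fun k =>
      le_trans (Finset.le_sup (Finset.self_mem_range_succ k)) (Nat.le_add_left _ _)
    -- the limit sequence
    set β : ℕ → ℤ := fun k => α (N k) (M k) with hβdef
    have hβ : RepsPolyadic β := by
      intro q hq
      rw [Nat.cofinite_eq_atTop, eventually_atTop]
      refine ⟨q.toNat, fun k hk => ?_⟩
      have hqk : q ∣ (k.factorial : ℤ) := by
        have h1 : q.toNat ∣ k.factorial := Nat.dvd_factorial (by omega) hk
        have h2 := Int.natCast_dvd_natCast.mpr h1
        rwa [Int.toNat_of_nonneg hq.le] at h2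
      have h1 : (k.factorial : ℤ) ∣ α (N k) (M k) - α (N k) (M (k + 1)) :=
        hT₀B k (M k) (hMT k) (M (k + 1)) (le_trans (hMT k) (hMmono (by omega)))
      have h2 : (k.factorial : ℤ) ∣ α (N k) (M (k + 1)) - α (N (k + 1)) (M (k + 1)) :=
        hT₀A (k + 1) (M (k + 1)) (hMT (k + 1)) k (Finset.mem_range.mpr (by omega))
          (N k) (Finset.mem_Icc.mpr ⟨le_refl _, hNmono (by omega)⟩)
      have he : β k - β (k + 1)
          = (α (N k) (M k) - α (N k) (M (k + 1)))
            + (α (N k) (M (k + 1)) - α (N (k + 1)) (M (k + 1))) := by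
        show α (N k) (M k) - α (N (k + 1)) (M (k + 1)) = _
        ring
      show q ∣ β k - β (k + 1)
      rw [he]
      exact dvd_trans hqk (dvd_add h1 h2)
    refine ⟨⟨Ideal.Quotient.mk C0 β, ⟨β, hβ, rfl⟩⟩, ?_⟩
    intro p hp
    set m := p.toNat with hmdef
    have hpm : p ∣ (m.factorial : ℤ) := by
      have h1 : m ∣ m.factorial := Nat.dvd_factorial (by omega) le_rfl
      have h2 := Int.natCast_dvd_natCast.mpr h1
      rwa [hmdef, Int.toNat_of_nonneg hp.le] at h2
    rw [Nat.cofinite_eq_atTop, eventually_atTop]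
    refine ⟨N m, fun n hn => ?_⟩
    have hmk : Ideal.Quotient.mk C0 (α n - β)
        = ((A n - ⟨Ideal.Quotient.mk C0 β, ⟨β, hβ, rfl⟩⟩ : ↥Polyadic) : CQuot) := by
      rw [map_sub, hαmk n]; rfl
    rw [mem_GIdl_iff hp _ (α n - β) (reps_sub (hαreps n) hβ) hmk,
      Nat.cofinite_eq_atTop, eventually_atTop]
    obtain ⟨S, hS⟩ := reps_stable (hαreps n) (hfac m)
    refine ⟨max (max m n) S, fun k hk => ?_⟩
    have hkm : m ≤ k := le_trans (le_trans (le_max_left _ _) (le_max_left _ _)) hk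
    have hkn : n ≤ k := le_trans (le_trans (le_max_right _ _) (le_max_left _ _)) hk
    have hkS : S ≤ k := le_trans (le_max_right _ _) hk
    have h1 : (m.factorial : ℤ) ∣ α n k - α n (M k) :=
      hS k hkS (M k) (le_trans hkS (hMself k))
    have h2 : (m.factorial : ℤ) ∣ α n (M k) - α (N k) (M k) :=
      hT₀A k (M k) (hMT k) m (Finset.mem_range.mpr (by omega)) n
        (Finset.mem_Icc.mpr ⟨hn, le_trans hkn (hNself k)⟩)
    have he : (α n - β) k = (α n k - α n (M k)) + (α n (M k) - α (N k) (M k)) := by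
      show α n k - α (N k) (M k) = _
      ring
    rw [he]
    exact dvd_trans hpm (dvd_add h1 h2)
end

section
/- A sequence α : ℕ → ℤ is an absolute stabilizer (i.e., there exists an integer m such that for every periodic function u : ℤ → ℂ the sequence k ↦ u(α_k) is eventually equal to u(m)) if and only if α represents an integer polyadic number, i.e., there exists an integer m such that the sequence k ↦ α_k − m is a 0-sequence (for every positive integer n, n divides α_k − m for all but finitely many k). Moreover, for an absolute stabilizer the integer m with this property is unique. -/
/-- `α` is an absolute stabilizer with value `m`: for every periodic function
`u : ℤ → ℂ`, the sequence `k ↦ u (α k)` is eventually equal to `u m`. -/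
def IsAbsoluteStabilizerAt (α : ℕ → ℤ) (m : ℤ) : Prop :=
  ∀ u : ℤ → ℂ, (∃ p : ℤ, 0 < p ∧ Function.Periodic u p) →
    ∀ᶠ k in Filter.cofinite, u (α k) = u m

/-- `α` represents the integer polyadic number with value `m`: the sequence
`k ↦ α k − m` is a `0`-sequence. -/
def RepsIntegerPolyadicAt (α : ℕ → ℤ) (m : ℤ) : Prop :=
  ∀ n : ℤ, 0 < n → ∀ᶠ k in Filter.cofinite, n ∣ α k - m

lemma periodic_eq_of_dvd {u : ℤ → ℂ} {p : ℤ} (h : Function.Periodic u p)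
    {a b : ℤ} (hd : p ∣ b - a) : u b = u a := by
  obtain ⟨c, hc⟩ := hd
  have : b = a + c • p := by
    rw [zsmul_eq_mul]
    push_cast
    linarith [mul_comm p c]
  rw [this, (h.zsmul c) a]

lemma mod_periodic (n : ℤ) : Function.Periodic (fun x : ℤ => ((x % n : ℤ) : ℂ)) n := by
  intro x
  simp [Int.add_mul_emod_self_left]

lemma reps_of_abs {α : ℕ → ℤ} {m : ℤ} (h : IsAbsoluteStabilizerAt α m) :
    RepsIntegerPolyadicAt α m := by
  intro n hn
  have := h (fun x : ℤ => ((x % n : ℤ) : ℂ)) ⟨n, hn, mod_periodic n⟩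
  filter_upwards [this] with k hk
  have h2 : α k % n = m % n := by exact_mod_cast hk
  exact Int.ModEq.dvd (Int.ModEq.symm h2)

/-- A sequence is an absolute stabilizer iff it represents an integer polyadic
number; moreover the corresponding integer value is unique. -/
theorem isAbsoluteStabilizer_iff_repsIntegerPolyadic (α : ℕ → ℤ) :
    ((∃ m : ℤ, IsAbsoluteStabilizerAt α m) ↔ (∃ m : ℤ, RepsIntegerPolyadicAt α m)) ∧
    (∀ m m' : ℤ, IsAbsoluteStabilizerAt α m → IsAbsoluteStabilizerAt α m' → m = m') := by
  constructor
  · constructor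
    · rintro ⟨m, hm⟩; exact ⟨m, reps_of_abs hm⟩
    · rintro ⟨m, hm⟩
      refine ⟨m, fun u ⟨p, hp, hper⟩ => ?_⟩
      filter_upwards [hm p hp] with k hk
      exact periodic_eq_of_dvd hper (by simpa using hk)
  · intro m m' h h'
    have hm := reps_of_abs h
    have hm' := reps_of_abs h'
    by_contra hne
    set n := |m - m'| + 1 with hn
    have hnpos : 0 < n := by positivity
    have := ((hm n hnpos).and (hm' n hnpos)).exists
    obtain ⟨k, h1, h2⟩ := this
    have : n ∣ m - m' := by
      have := dvd_sub h2 h1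
      simpa [sub_sub_sub_cancel_left] using this
    have h3 : n ∣ |m - m'| := (dvd_abs n _).mpr this
    have h4 := Int.le_of_dvd (abs_pos.mpr (sub_ne_zero.mpr hne)) h3
    omega
end
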